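/- arXiv:2207.01574 — 8 statements merged into one kernel-verified Lean document; each statement's English description precedes it below -/
import Mathlib

section
/- Let V be a finite index set with positive real weights (N_v)_{v∈V}, let n ≥ 1, and let (x_{i,v})_{1≤i≤n, v∈V} be real numbers such that for every i, ∑_{v∈V} N_v · x_{i,v} = 0. Then ∑_{v∈V} N_v · max_{1≤i≤n} |x_{i,v}| ≤ (n+1) · ∑_{v∈V} N_v · max(0, max_{1≤i≤n} x_{i,v}). -/
open Finset

theorem stmt_0 {V : Type*} [Fintype V] (N : V → ℝ) (hN : ∀ v, 0 < N v)
    (n : ℕ) (hn : 1 ≤ n) (x : Fin n → V → ℝ)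
    (hx : ∀ i : Fin n, ∑ v, N v * x i v = 0) :
    ∑ v, N v * ((Finset.univ : Finset (Fin n)).sup'
        (Finset.univ_nonempty_iff.mpr (Fin.pos_iff_nonempty.mp hn)) fun i => |x i v|)
      ≤ (n + 1 : ℝ) * ∑ v, N v * max 0 ((Finset.univ : Finset (Fin n)).sup'
        (Finset.univ_nonempty_iff.mpr (Fin.pos_iff_nonempty.mp hn)) fun i => x i v) := by
  set ne := Finset.univ_nonempty_iff.mpr (Fin.pos_iff_nonempty.mp hn)
  set S : V → ℝ := fun v => (Finset.univ : Finset (Fin n)).sup' ne fun i => x i v with hS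
  -- key: for each i, ∑ N v * max 0 (-x i v) = ∑ N v * max 0 (x i v)
  have key : ∀ i : Fin n, ∑ v, N v * max 0 (-x i v) = ∑ v, N v * max 0 (x i v) := by
    intro i
    have h : ∑ v, (N v * max 0 (x i v) - N v * max 0 (-x i v)) = 0 := by
      have : ∀ v, N v * max 0 (x i v) - N v * max 0 (-x i v) = N v * x i v := by
        intro v
        rw [← mul_sub]
        congr 1
        rcases le_or_gt 0 (x i v) with h | h
        · rw [max_eq_right h, max_eq_left (by linarith)]; ring
        · rw [max_eq_left h.le, max_eq_right (by linarith)]; ring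
      simp_rw [this]; exact hx i
    rw [Finset.sum_sub_distrib] at h
    linarith
  -- pointwise bound
  have pw : ∀ v, ((Finset.univ : Finset (Fin n)).sup' ne fun i => |x i v|)
      ≤ max 0 (S v) + ∑ i, max 0 (-x i v) := by
    intro v
    apply Finset.sup'_le
    intro i _
    have h1 : |x i v| = max 0 (x i v) + max 0 (-x i v) := by
      rcases le_or_gt 0 (x i v) with h | h
      · rw [abs_of_nonneg h, max_eq_right h, max_eq_left (by linarith)]; ring
      · rw [abs_of_neg h, max_eq_left h.le, max_eq_right (by linarith)]; ring
    have h2 : max 0 (x i v) ≤ max 0 (S v) :=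
      max_le_max le_rfl (Finset.le_sup' (fun i => x i v) (Finset.mem_univ i))
    have h3 : max 0 (-x i v) ≤ ∑ j, max 0 (-x j v) :=
      Finset.single_le_sum (fun j _ => le_max_left 0 (-x j v)) (Finset.mem_univ i)
    linarith
  calc ∑ v, N v * ((Finset.univ : Finset (Fin n)).sup' ne fun i => |x i v|)
      ≤ ∑ v, N v * (max 0 (S v) + ∑ i, max 0 (-x i v)) := by
        apply Finset.sum_le_sum
        intro v _
        exact mul_le_mul_of_nonneg_left (pw v) (hN v).le
    _ = ∑ v, N v * max 0 (S v) + ∑ i, ∑ v, N v * max 0 (-x i v) := by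
        simp_rw [mul_add, Finset.sum_add_distrib, Finset.mul_sum]
        rw [Finset.sum_comm]
    _ ≤ ∑ v, N v * max 0 (S v) + ∑ i : Fin n, ∑ v, N v * max 0 (S v) := by
        apply add_le_add_right
        apply Finset.sum_le_sum
        intro i _
        rw [key i]
        apply Finset.sum_le_sum
        intro v _
        apply mul_le_mul_of_nonneg_left _ (hN v).le
        exact max_le_max le_rfl (Finset.le_sup' (fun i => x i v) (Finset.mem_univ i))
    _ = (n + 1 : ℝ) * ∑ v, N v * max 0 (S v) := by
        rw [Finset.sum_const, Finset.card_univ, Fintype.card_fin, nsmul_eq_mul]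
        ring
end

section
/- Let x₁, x₂, x₃ and y₁, y₂, y₃ be real numbers. Let S denote the second largest element (counted with multiplicity) of the nine sums x_i + y_j, i.e. S = min over pairs (i₀,j₀) of max over (i,j) ≠ (i₀,j₀) of (x_i + y_j). Then S ≥ ½ · ( max_i x_i + smax_j y_j + smax_i x_i + max_j y_j ), where smax of three reals denotes their second largest element (the median). -/
open Finset

/-- The sub-maximum (second largest element, i.e. the median) of three reals. -/
noncomputable def smax3 (t : Fin 3 → ℝ) : ℝ :=
  (Finset.univ : Finset (Fin 3)).inf' ⟨0, Finset.mem_univ 0⟩ fun j =>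
    (Finset.univ.erase j).sup'
      (⟨j + 1, Finset.mem_erase.mpr ⟨by simp [Fin.ext_iff, Fin.add_def]; omega,
        Finset.mem_univ _⟩⟩) t

/-- The second largest (with multiplicity) of the nine sums `x i + y j`. -/
noncomputable def smax9 (x y : Fin 3 → ℝ) : ℝ :=
  (Finset.univ : Finset (Fin 3 × Fin 3)).inf' ⟨(0, 0), Finset.mem_univ _⟩ fun p =>
    (Finset.univ.erase p).sup'
      (⟨(p.1 + 1, p.2), Finset.mem_erase.mpr
        ⟨by simp [Prod.ext_iff, Fin.ext_iff, Fin.add_def]; omega, Finset.mem_univ _⟩⟩)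
      fun q => x q.1 + y q.2

theorem stmt_1 (x y : Fin 3 → ℝ) :
    (1 / 2) * ((Finset.univ.sup' ⟨0, Finset.mem_univ 0⟩ x) + smax3 y
        + smax3 x + (Finset.univ.sup' ⟨0, Finset.mem_univ 0⟩ y))
      ≤ smax9 x y := by
  obtain ⟨a, -, ha⟩ := Finset.exists_mem_eq_sup'
    (⟨0, Finset.mem_univ 0⟩ : (Finset.univ : Finset (Fin 3)).Nonempty) x
  obtain ⟨b, -, hb⟩ := Finset.exists_mem_eq_sup'
    (⟨0, Finset.mem_univ 0⟩ : (Finset.univ : Finset (Fin 3)).Nonempty) y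
  have hnea : (Finset.univ.erase a).Nonempty := by
    obtain ⟨c, hc⟩ := exists_ne a
    exact ⟨c, Finset.mem_erase.mpr ⟨hc, Finset.mem_univ _⟩⟩
  have hneb : (Finset.univ.erase b).Nonempty := by
    obtain ⟨c, hc⟩ := exists_ne b
    exact ⟨c, Finset.mem_erase.mpr ⟨hc, Finset.mem_univ _⟩⟩
  obtain ⟨a', ha'mem, ha'⟩ := Finset.exists_mem_eq_sup' hnea x
  obtain ⟨b', hb'mem, hb'⟩ := Finset.exists_mem_eq_sup' hneb y
  have haa : a' ≠ a := (Finset.mem_erase.mp ha'mem).1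
  have hbb : b' ≠ b := (Finset.mem_erase.mp hb'mem).1
  have hsx : smax3 x ≤ x a' := by
    rw [← ha']
    exact Finset.inf'_le _ (Finset.mem_univ a)
  have hsy : smax3 y ≤ y b' := by
    rw [← hb']
    exact Finset.inf'_le _ (Finset.mem_univ b)
  have hxa : ∀ i, x i ≤ x a := fun i => ha ▸ Finset.le_sup' x (Finset.mem_univ i)
  have hyb : ∀ j, y j ≤ y b := fun j => hb ▸ Finset.le_sup' y (Finset.mem_univ j)
  rw [smax9]
  apply Finset.le_inf'
  intro p hp
  have hnep : (Finset.univ.erase p).Nonempty := by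
    obtain ⟨c, hc⟩ := exists_ne p
    exact ⟨c, Finset.mem_erase.mpr ⟨hc, Finset.mem_univ _⟩⟩
  have key : ∀ q : Fin 3 × Fin 3, q ≠ p →
      x q.1 + y q.2 ≤ (Finset.univ.erase p).sup' hnep fun q => x q.1 + y q.2 :=
    fun q hq => Finset.le_sup' (f := fun q => x q.1 + y q.2) (Finset.mem_erase.mpr ⟨hq, Finset.mem_univ _⟩)
  have hA : x a + y b' ≤ (Finset.univ.erase p).sup' hnep fun q => x q.1 + y q.2 := by
    rcases eq_or_ne p (a, b) with h | h
    · have := key (a, b') (by simp [h, Prod.ext_iff, hbb])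
      simpa using this
    · have := key (a, b) (Ne.symm h)
      simp only at this
      have := hyb b'
      linarith
  have hB : x a' + y b ≤ (Finset.univ.erase p).sup' hnep fun q => x q.1 + y q.2 := by
    rcases eq_or_ne p (a', b) with h | h
    · have := key (a, b) (by simp [h, Prod.ext_iff, haa.symm])
      simp only at this
      have := hxa a'
      linarith
    · have := key (a', b) (Ne.symm h)
      simpa using this
  rw [ha, hb]
  calc (1:ℝ) / 2 * (x a + smax3 y + smax3 x + y b)
      ≤ 1 / 2 * ((x a + y b') + (x a' + y b)) := by linarith
    _ ≤ (Finset.univ.erase p).sup' hnep fun q => x q.1 + y q.2 := by linarith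
end

section
/- Let n ≥ 1, let x₁,…,x_n be real numbers, and let c₁,…,c_n be real numbers with ∑_{i=1}^n c_i = 0. Then ∑_{i=1}^n ∑_{j=1}^n c_i c_j |x_i - x_j| ≤ 0. Equivalently, -∑_{i,j} c_i c_j max(x_i, x_j) ≥ 0. -/
lemma aux_const_sum {ι : Type*} (s : Finset ι) (c : ι → ℝ) (a : ℝ) :
    ∑ i ∈ s, ∑ j ∈ s, c i * c j * a = (∑ i ∈ s, c i) * (∑ j ∈ s, c j) * a := by
  rw [Finset.sum_mul_sum, Finset.sum_mul]
  exact Finset.sum_congr rfl fun i _ => by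
    rw [Finset.sum_mul]

lemma aux_min {ι : Type*} [DecidableEq ι] (s : Finset ι) :
    ∀ (x c : ι → ℝ), (∀ i ∈ s, 0 ≤ x i) →
    0 ≤ ∑ i ∈ s, ∑ j ∈ s, c i * c j * min (x i) (x j) := by
  induction s using Finset.strongInduction with
  | _ s ih =>
    intro x c hx
    rcases s.eq_empty_or_nonempty with rfl | hs
    · simp
    obtain ⟨k, hk, hkmin⟩ := Finset.exists_min_image s x hs
    set y : ι → ℝ := fun i => x i - x k with hy
    have hy0 : ∀ i ∈ s, 0 ≤ y i := fun i hi => sub_nonneg.2 (hkmin i hi)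
    have hsum : ∑ i ∈ s, ∑ j ∈ s, c i * c j * min (x i) (x j)
        = (∑ i ∈ s, c i) * (∑ j ∈ s, c j) * x k
          + ∑ i ∈ s, ∑ j ∈ s, c i * c j * min (y i) (y j) := by
      calc ∑ i ∈ s, ∑ j ∈ s, c i * c j * min (x i) (x j)
          = ∑ i ∈ s, ∑ j ∈ s, (c i * c j * x k + c i * c j * min (y i) (y j)) := by
            refine Finset.sum_congr rfl fun i _ => Finset.sum_congr rfl fun j _ => ?_
            have h : min (y i) (y j) = min (x i) (x j) - x k := min_sub_sub_right _ _ _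
            rw [h]; ring
        _ = (∑ i ∈ s, c i) * (∑ j ∈ s, c j) * x k
            + ∑ i ∈ s, ∑ j ∈ s, c i * c j * min (y i) (y j) := by
            simp only [Finset.sum_add_distrib]
            rw [aux_const_sum]
    have herase : ∑ i ∈ s, ∑ j ∈ s, c i * c j * min (y i) (y j)
        = ∑ i ∈ s.erase k, ∑ j ∈ s.erase k, c i * c j * min (y i) (y j) := by
      rw [← Finset.add_sum_erase _ _ hk]
      have hyk : y k = 0 := by simp [hy]
      have h1 : ∑ j ∈ s, c k * c j * min (y k) (y j) = 0 := by
        refine Finset.sum_eq_zero fun j hj => ?_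
        rw [hyk, min_eq_left (hy0 j hj)]
        ring
      rw [h1, zero_add]
      refine Finset.sum_congr rfl fun i hi => ?_
      rw [← Finset.add_sum_erase _ _ hk]
      have h2 : c i * c k * min (y i) (y k) = 0 := by
        rw [hyk, min_eq_right (hy0 i (Finset.mem_of_mem_erase hi))]
        ring
      rw [h2, zero_add]
    have hrec := ih (s.erase k) (Finset.erase_ssubset hk) y c
      (fun i hi => hy0 i (Finset.mem_of_mem_erase hi))
    have hxk : 0 ≤ x k := hx k hk
    rw [hsum, herase]
    have hq : 0 ≤ (∑ i ∈ s, c i) * (∑ j ∈ s, c j) * x k := by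
      have := mul_self_nonneg (∑ i ∈ s, c i)
      positivity
    linarith

theorem stmt_6 (n : ℕ) (hn : 1 ≤ n) (x c : Fin n → ℝ) (hc : ∑ i, c i = 0) :
    (∑ i, ∑ j, c i * c j * |x i - x j| ≤ 0) ∧
      0 ≤ -∑ i, ∑ j, c i * c j * max (x i) (x j) := by
  have hnonempty : Nonempty (Fin n) := ⟨⟨0, hn⟩⟩
  have hne : (Finset.univ : Finset (Fin n)).Nonempty := Finset.univ_nonempty
  obtain ⟨k, hk, hkmin⟩ := Finset.exists_min_image Finset.univ x hne
  have key0 := aux_min Finset.univ (fun i => x i - x k) c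
    (fun i _ => sub_nonneg.2 (hkmin i (Finset.mem_univ i)))
  have hmin : 0 ≤ ∑ i, ∑ j, c i * c j * min (x i) (x j) := by
    have heq : ∑ i, ∑ j, c i * c j * min (x i - x k) (x j - x k)
        = ∑ i, ∑ j, c i * c j * min (x i) (x j)
          - (∑ i, c i) * (∑ j, c j) * x k := by
      calc ∑ i, ∑ j, c i * c j * min (x i - x k) (x j - x k)
          = ∑ i, ∑ j, (c i * c j * min (x i) (x j) - c i * c j * x k) := by
            refine Finset.sum_congr rfl fun i _ => Finset.sum_congr rfl fun j _ => ?_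
            rw [min_sub_sub_right]; ring
        _ = _ := by
            simp only [Finset.sum_sub_distrib]
            rw [aux_const_sum]
    rw [heq, hc] at key0
    linarith [key0]
  have hxi : ∑ i, ∑ j, c i * c j * x i = 0 := by
    have h : ∀ i : Fin n, ∑ j, c i * c j * x i = c i * x i * ∑ j, c j := by
      intro i; rw [Finset.mul_sum]; exact Finset.sum_congr rfl fun j _ => by ring
    simp [h, hc]
  have hxj : ∑ i, ∑ j, c i * c j * x j = 0 := by
    rw [Finset.sum_comm]
    have h : ∀ j : Fin n, ∑ i, c i * c j * x j = c j * x j * ∑ i, c i := by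
      intro j; rw [Finset.mul_sum]; exact Finset.sum_congr rfl fun i _ => by ring
    simp [h, hc]
  have habs : ∑ i, ∑ j, c i * c j * |x i - x j|
      = (∑ i, ∑ j, c i * c j * x i) + (∑ i, ∑ j, c i * c j * x j)
        - 2 * ∑ i, ∑ j, c i * c j * min (x i) (x j) := by
    calc ∑ i, ∑ j, c i * c j * |x i - x j|
        = ∑ i, ∑ j, (c i * c j * x i + c i * c j * x j
            - 2 * (c i * c j * min (x i) (x j))) := by
          refine Finset.sum_congr rfl fun i _ => Finset.sum_congr rfl fun j _ => ?_
          have h : |x i - x j| = x i + x j - 2 * min (x i) (x j) := by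
            rcases le_total (x i) (x j) with h | h
            · rw [abs_of_nonpos (by linarith), min_eq_left h]; ring
            · rw [abs_of_nonneg (by linarith), min_eq_right h]; ring
          rw [h]; ring
      _ = _ := by
          simp only [Finset.sum_sub_distrib, Finset.sum_add_distrib, ← Finset.mul_sum]
  have hmax : ∑ i, ∑ j, c i * c j * max (x i) (x j)
      = (∑ i, ∑ j, c i * c j * x i) + (∑ i, ∑ j, c i * c j * x j)
        - ∑ i, ∑ j, c i * c j * min (x i) (x j) := by
    calc ∑ i, ∑ j, c i * c j * max (x i) (x j)
        = ∑ i, ∑ j, (c i * c j * x i + c i * c j * x j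
            - c i * c j * min (x i) (x j)) := by
          refine Finset.sum_congr rfl fun i _ => Finset.sum_congr rfl fun j _ => ?_
          have h : max (x i) (x j) = x i + x j - min (x i) (x j) := by
            rw [← max_add_min (x i) (x j)]; ring
          rw [h]; ring
      _ = _ := by
          simp only [Finset.sum_sub_distrib, Finset.sum_add_distrib]
  constructor
  · rw [habs, hxi, hxj]; linarith
  · rw [hmax, hxi, hxj]; linarith
end

section
/- For real numbers r ≤ s ≤ t ≤ u with r < s and t < u, let μ and ν be the uniform probability measures on [r,s] and [t,u] respectively, and define the mutual energy E(μ,ν) := ∫∫ max(x,y) dμ(x)dν(y) − ½∫∫ max(x,y) dμ(x)dμ(y) − ½∫∫ max(x,y) dν(x)dν(y). Then E(μ,ν) = (s−r)/6 + (u−t)/6 + (t−s)/2. -/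
open MeasureTheory

/-- The uniform probability measure on the interval `[r, s]`. -/
noncomputable def unifIcc (r s : ℝ) : Measure ℝ :=
  (ENNReal.ofReal (s - r))⁻¹ • (volume.restrict (Set.Icc r s))

/-- The mutual energy of two measures on `ℝ` with respect to the kernel `max x y`. -/
noncomputable def mutualE (μ ν : Measure ℝ) : ℝ :=
  (∫ x, ∫ y, max x y ∂ν ∂μ)
    - (1/2) * (∫ x, ∫ y, max x y ∂μ ∂μ)
    - (1/2) * (∫ x, ∫ y, max x y ∂ν ∂ν)

lemma integral_unifIcc (r s : ℝ) (h : r < s) (f : ℝ → ℝ) :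
    ∫ x, f x ∂(unifIcc r s) = (s - r)⁻¹ * ∫ x in r..s, f x := by
  rw [unifIcc, integral_smul_measure, intervalIntegral.integral_of_le h.le,
      ← MeasureTheory.integral_Icc_eq_integral_Ioc]
  rw [ENNReal.toReal_inv, ENNReal.toReal_ofReal (by linarith : (0:ℝ) ≤ s - r)]
  simp [smul_eq_mul]

lemma inner_max (r s x : ℝ) (hx1 : r ≤ x) (hx2 : x ≤ s) :
    ∫ y in r..s, max x y = x * (x - r) + (s ^ 2 - x ^ 2) / 2 := by
  have hi : ∀ a b : ℝ, IntervalIntegrable (fun y => max x y) volume a b :=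
    fun a b => (continuous_const.max continuous_id).intervalIntegrable a b
  rw [← intervalIntegral.integral_add_adjacent_intervals (a := r) (b := x) (c := s)
      (hi r x) (hi x s)]
  have h1 : ∫ y in r..x, max x y = x * (x - r) := by
    rw [intervalIntegral.integral_congr (g := fun _ => x)
      (fun y hy => by
        rw [Set.uIcc_of_le hx1] at hy
        exact max_eq_left hy.2)]
    simp [mul_comm]
  have h2 : ∫ y in x..s, max x y = (s ^ 2 - x ^ 2) / 2 := by
    rw [intervalIntegral.integral_congr (g := fun y => y)
      (fun y hy => by
        rw [Set.uIcc_of_le hx2] at hy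
        exact max_eq_right hy.1)]
    simpa using intervalIntegral.integral_id (a := x) (b := s)
  rw [h1, h2]

lemma poly2 (a b A B C : ℝ) :
    ∫ x in a..b, (A * x ^ 2 + B * x + C) =
      A * (b ^ 3 - a ^ 3) / 3 + B * (b ^ 2 - a ^ 2) / 2 + C * (b - a) := by
  have h2 : ∫ x in a..b, x ^ 2 = (b ^ 3 - a ^ 3) / 3 := by
    rw [integral_pow]; norm_num
  have h1 : ∫ x in a..b, x = (b ^ 2 - a ^ 2) / 2 := by
    simpa using intervalIntegral.integral_id (a := a) (b := b)
  have i2 : IntervalIntegrable (fun x : ℝ => A * x ^ 2) volume a b :=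
    (continuous_const.mul (continuous_pow 2)).intervalIntegrable a b
  have i1 : IntervalIntegrable (fun x : ℝ => B * x) volume a b :=
    (continuous_const.mul continuous_id).intervalIntegrable a b
  have i0 : IntervalIntegrable (fun _ : ℝ => C) volume a b :=
    continuous_const.intervalIntegrable a b
  rw [intervalIntegral.integral_add (i2.add i1) i0, intervalIntegral.integral_add i2 i1,
      intervalIntegral.integral_const_mul, intervalIntegral.integral_const_mul,
      h2, h1, intervalIntegral.integral_const, smul_eq_mul]
  ring

lemma self_energy (r s : ℝ) (hrs : r < s) :
    ∫ x, ∫ y, max x y ∂(unifIcc r s) ∂(unifIcc r s) = r + 2 * (s - r) / 3 := by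
  have hne : s - r ≠ 0 := by linarith
  rw [integral_unifIcc r s hrs]
  rw [intervalIntegral.integral_congr
    (g := fun x => (s - r)⁻¹ * ((1/2) * x ^ 2 + (-r) * x + s ^ 2 / 2))
    (fun x hx => by
      rw [Set.uIcc_of_le hrs.le] at hx
      rw [integral_unifIcc r s hrs, inner_max r s x hx.1 hx.2]
      ring)]
  rw [intervalIntegral.integral_const_mul, poly2]
  field_simp
  ring

lemma cross_energy (r s t u : ℝ) (hrs : r < s) (hst : s ≤ t) (htu : t < u) :
    ∫ x, ∫ y, max x y ∂(unifIcc t u) ∂(unifIcc r s) = (t + u) / 2 := by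
  have hne : u - t ≠ 0 := by linarith
  rw [integral_unifIcc r s hrs]
  rw [intervalIntegral.integral_congr (g := fun _ => (t + u) / 2)
    (fun x hx => by
      rw [Set.uIcc_of_le hrs.le] at hx
      have hxt : x ≤ t := le_trans hx.2 hst
      rw [integral_unifIcc t u htu]
      rw [intervalIntegral.integral_congr (g := fun y => y)
        (fun y hy => by
          rw [Set.uIcc_of_le htu.le] at hy
          exact max_eq_right (le_trans hxt hy.1))]
      rw [show (∫ y in t..u, y) = (u ^ 2 - t ^ 2) / 2 by
        simpa using intervalIntegral.integral_id (a := t) (b := u)]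
      field_simp
      ring)]
  rw [intervalIntegral.integral_const]
  have hne2 : s - r ≠ 0 := by linarith
  field_simp
  rw [smul_eq_mul]; ring

theorem stmt_8 (r s t u : ℝ) (hrs : r < s) (hst : s ≤ t) (htu : t < u) :
    mutualE (unifIcc r s) (unifIcc t u) = (s - r) / 6 + (u - t) / 6 + (t - s) / 2 := by
  rw [mutualE, cross_energy r s t u hrs hst htu, self_energy r s hrs, self_energy t u htu]
  ring
end

section
/- Let b₁ ≤ a₁ < a₂ ≤ b₂ be real numbers, let μ be the uniform probability measure on [a₁,a₂] and ν the uniform probability measure on [b₁,b₂]. With the mutual energy E(μ,ν) := ∫∫ max(x,y) dμ dν − ½∫∫ max dμ dμ − ½∫∫ max dν dν, and setting ℓ_a = a₂−a₁, ℓ_b = b₂−b₁, ℓ' = a₁−b₁, ℓ'' = b₂−a₂, one has E(μ,ν) = ℓ_b/6 − ℓ_a/3 + ℓ_a²/(6ℓ_b) − (ℓ'·ℓ'')/(2ℓ_b). -/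
open MeasureTheory

lemma inner_int (r s x : ℝ) (hrs : r < s) (hx : x ∈ Set.Icc r s) :
    ∫ y, max x y ∂(unifIcc r s) = (x * (s - r) + (s - x) ^ 2 / 2) / (s - r) := by
  obtain ⟨hxr, hxs⟩ := hx
  rw [unifIcc, integral_smul_measure, ENNReal.toReal_inv,
    ENNReal.toReal_ofReal (by linarith)]
  have hset : ∫ y in Set.Icc r s, max x y = ∫ y in r..s, max x y := by
    rw [intervalIntegral.integral_of_le hrs.le, integral_Icc_eq_integral_Ioc]
  rw [hset]
  have hsplit : ∫ y in r..s, max x y = (∫ y in r..x, max x y) + ∫ y in x..s, max x y := by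
    rw [intervalIntegral.integral_add_adjacent_intervals]
    · exact ((continuous_const.max continuous_id).intervalIntegrable r x)
    · exact ((continuous_const.max continuous_id).intervalIntegrable x s)
  have h1 : ∫ y in r..x, max x y = (x - r) * x := by
    rw [intervalIntegral.integral_congr (g := fun _ => x)
      (fun y hy => by
        rw [Set.uIcc_of_le hxr] at hy
        exact max_eq_left hy.2)]
    simp [smul_eq_mul]
  have h2 : ∫ y in x..s, max x y = (s ^ 2 - x ^ 2) / 2 := by
    rw [intervalIntegral.integral_congr (g := fun y => y)
      (fun y hy => by
        rw [Set.uIcc_of_le hxs] at hy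
        exact max_eq_right hy.1)]
    simp [integral_id]
  rw [hsplit, h1, h2, smul_eq_mul]
  have hL : s - r ≠ 0 := by linarith
  field_simp
  ring

lemma outer_eq (r s : ℝ) (hrs : r < s) (F g : ℝ → ℝ)
    (hFg : ∀ x ∈ Set.Icc r s, F x = g x) :
    ∫ x, F x ∂(unifIcc r s) = (s - r)⁻¹ * ∫ x in r..s, g x := by
  rw [unifIcc, integral_smul_measure, ENNReal.toReal_inv,
    ENNReal.toReal_ofReal (by linarith)]
  rw [setIntegral_congr_fun measurableSet_Icc hFg,
    integral_Icc_eq_integral_Ioc, ← intervalIntegral.integral_of_le hrs.le,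
    smul_eq_mul]

lemma quad_int (p q r a b : ℝ) :
    ∫ x in a..b, (p + q * x + r * x ^ 2)
      = p * (b - a) + q * (b ^ 2 - a ^ 2) / 2 + r * (b ^ 3 - a ^ 3) / 3 := by
  have h1 : IntervalIntegrable (fun _ : ℝ => p) volume a b :=
    continuous_const.intervalIntegrable a b
  have h2 : IntervalIntegrable (fun x : ℝ => q * x) volume a b :=
    (continuous_const.mul continuous_id).intervalIntegrable a b
  have h3 : IntervalIntegrable (fun x : ℝ => r * x ^ 2) volume a b :=
    (continuous_const.mul (continuous_pow 2)).intervalIntegrable a b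
  rw [intervalIntegral.integral_add (h1.add h2) h3, intervalIntegral.integral_add h1 h2,
    intervalIntegral.integral_const_mul, intervalIntegral.integral_const_mul]
  simp only [intervalIntegral.integral_const, smul_eq_mul]
  rw [integral_id, integral_pow]
  push_cast
  ring

lemma unif_energy (r s c d : ℝ) (hrs : r < s) (hcd : c < d) (h1 : c ≤ r) (h2 : s ≤ d) :
    ∫ x, (∫ y, max x y ∂(unifIcc c d)) ∂(unifIcc r s)
      = (s - r)⁻¹ * ((d - c)⁻¹ *
        ((d - c) * (s ^ 2 - r ^ 2) / 2 + ((d - r) ^ 3 - (d - s) ^ 3) / 6)) := by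
  have hL : d - c ≠ 0 := by linarith
  rw [outer_eq r s hrs _ (fun x => (x * (d - c) + (d - x) ^ 2 / 2) / (d - c))
    (fun x hx => inner_int c d x hcd ⟨le_trans h1 hx.1, le_trans hx.2 h2⟩)]
  have hfun : ∀ x : ℝ, (x * (d - c) + (d - x) ^ 2 / 2) / (d - c)
      = d ^ 2 / (2 * (d - c)) + (1 - d / (d - c)) * x + (1 / (2 * (d - c))) * x ^ 2 := by
    intro x; field_simp; ring
  have hs : s - r ≠ 0 := by linarith
  simp only [hfun, quad_int]
  field_simp
  ring

theorem stmt_10 (b₁ a₁ a₂ b₂ : ℝ) (h₁ : b₁ ≤ a₁) (h₂ : a₁ < a₂) (h₃ : a₂ ≤ b₂) :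
    mutualE (unifIcc a₁ a₂) (unifIcc b₁ b₂)
      = (b₂ - b₁) / 6 - (a₂ - a₁) / 3 + (a₂ - a₁) ^ 2 / (6 * (b₂ - b₁))
        - (a₁ - b₁) * (b₂ - a₂) / (2 * (b₂ - b₁)) := by
  have hb : b₁ < b₂ := lt_of_le_of_lt h₁ (lt_of_lt_of_le h₂ h₃)
  rw [mutualE,
    unif_energy a₁ a₂ b₁ b₂ h₂ hb h₁ h₃,
    unif_energy a₁ a₂ a₁ a₂ h₂ h₂ le_rfl le_rfl,
    unif_energy b₁ b₂ b₁ b₂ hb hb le_rfl le_rfl]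
  have hLa : a₂ - a₁ ≠ 0 := by linarith
  have hLb : b₂ - b₁ ≠ 0 := by linarith
  field_simp
  ring
end

section
/- Let a, b > 0 be real numbers and let c ∈ [0, min(a,b)]. Then −2c³ + 3(a+b)c² − 6abc + ab(a+b) ≥ min(a,b)·(a−b)². -/
theorem stmt_13 (a b c : ℝ) (ha : 0 < a) (hb : 0 < b)
    (hc : c ∈ Set.Icc 0 (min a b)) :
    min a b * (a - b) ^ 2 ≤ -2 * c ^ 3 + 3 * (a + b) * c ^ 2 - 6 * a * b * c + a * b * (a + b) := by
  obtain ⟨h0, h1⟩ := hc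
  have hca : c ≤ a := h1.trans (min_le_left a b)
  have hcb : c ≤ b := h1.trans (min_le_right a b)
  rcases le_total a b with h | h
  · rw [min_eq_left h]
    nlinarith [mul_nonneg (mul_nonneg (sub_nonneg.2 hca) (sub_nonneg.2 hca)) (sub_nonneg.2 hcb), mul_nonneg h0 (mul_nonneg (sub_nonneg.2 hca) (sub_nonneg.2 hcb)), sq_nonneg (a - c), sq_nonneg (b - c)]
  · rw [min_eq_right h]
    nlinarith [mul_nonneg (mul_nonneg (sub_nonneg.2 hcb) (sub_nonneg.2 hcb)) (sub_nonneg.2 hca), mul_nonneg h0 (mul_nonneg (sub_nonneg.2 hca) (sub_nonneg.2 hcb)), sq_nonneg (a - c), sq_nonneg (b - c)]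
end

section
/- Let ℓ_a, ℓ_b > 0 and 0 ≤ ℓ_{ab} ≤ min(ℓ_a, ℓ_b), set m_a = (ℓ_a − ℓ_{ab})/2, m_b = (ℓ_b − ℓ_{ab})/2 and E₀ := (1/6)m_a²/ℓ_a + (1/6)m_b²/ℓ_b − (1/3)ℓ_{ab}(m_a/ℓ_a)(m_b/ℓ_b). Let λ ∈ [0, max(ℓ_a − ℓ_{ab}, ℓ_b − ℓ_{ab})] and ϱ > 0 satisfy max(ℓ_a, ℓ_b) ≤ ϱ·λ. Then E₀ ≥ λ/(48·ϱ²). -/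
private lemma key_17 (x y t : ℝ) (hx : 0 < x) (hy : 0 < y) (ht : 0 ≤ t)
    (hty : t ≤ y) (hyx : y ≤ x) :
    ((x - t) / 2) ^ 3 / (6 * x ^ 2) ≤
      (1/6) * ((x - t) / 2) ^ 2 / x + (1/6) * ((y - t) / 2) ^ 2 / y
        - (1/3) * t * (((x - t) / 2) / x) * (((y - t) / 2) / y) := by
  have ha : (0:ℝ) ≤ x - t := by linarith
  have hb : (0:ℝ) ≤ y - t := by linarith
  have hexp : (1/6) * ((x - t) / 2) ^ 2 / x + (1/6) * ((y - t) / 2) ^ 2 / y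
        - (1/3) * t * (((x - t) / 2) / x) * (((y - t) / 2) / y)
      - ((x - t) / 2) ^ 3 / (6 * x ^ 2)
      = ((x-t)^3*(y-t) + 2*(x-t)^2*(y-t)^2
        + t*(x-t)*(((x-t)-(y-t))^2 + 3*(y-t)^2) + 2*t^2*((x-t)-(y-t))^2)
        / (48 * x ^ 2 * y) := by
    field_simp
    ring
  have h2 : 0 ≤ (1/6) * ((x - t) / 2) ^ 2 / x + (1/6) * ((y - t) / 2) ^ 2 / y
        - (1/3) * t * (((x - t) / 2) / x) * (((y - t) / 2) / y)
      - ((x - t) / 2) ^ 3 / (6 * x ^ 2) := by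
    rw [hexp]; positivity
  linarith

private lemma aux_17 (la lb lab lam rho : ℝ) (hla : 0 < la) (hlb : 0 < lb)
    (hlab : 0 ≤ lab) (h1 : lab ≤ lb) (h2 : lb ≤ la)
    (hlam0 : 0 ≤ lam) (hlam1 : lam ≤ la - lab)
    (hrho : 0 < rho) (hmax : la ≤ rho * lam) :
    lam / (48 * rho ^ 2) ≤
      (1/6) * ((la - lab) / 2) ^ 2 / la + (1/6) * ((lb - lab) / 2) ^ 2 / lb
        - (1/3) * lab * (((la - lab) / 2) / la) * (((lb - lab) / 2) / lb) := by
  have hlam : 0 < lam := by nlinarith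
  have step1 : lam / (48 * rho ^ 2) ≤ lam ^ 3 / (48 * la ^ 2) := by
    rw [div_le_div_iff₀ (by positivity) (by positivity)]
    nlinarith [mul_pos hrho hlam, sq_nonneg (rho * lam - la)]
  have step2 : lam ^ 3 / (48 * la ^ 2) ≤ ((la - lab) / 2) ^ 3 / (6 * la ^ 2) := by
    have h3 : lam ^ 3 ≤ (la - lab) ^ 3 := by
      exact pow_le_pow_left₀ hlam0 hlam1 3
    rw [div_le_div_iff₀ (by positivity) (by positivity)]
    nlinarith [h3, sq_nonneg la]
  have step3 := key_17 la lb lab hla hlb hlab h1 h2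
  linarith

theorem stmt_17 (la lb lab lam rho : ℝ) (hla : 0 < la) (hlb : 0 < lb)
    (hlab : 0 ≤ lab) (hlab' : lab ≤ min la lb)
    (hlam : lam ∈ Set.Icc 0 (max (la - lab) (lb - lab)))
    (hrho : 0 < rho) (hmax : max la lb ≤ rho * lam) :
    lam / (48 * rho ^ 2) ≤
      (1/6) * ((la - lab) / 2) ^ 2 / la + (1/6) * ((lb - lab) / 2) ^ 2 / lb
        - (1/3) * lab * (((la - lab) / 2) / la) * (((lb - lab) / 2) / lb) := by
  obtain ⟨hlam0, hlam1⟩ := hlam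
  rcases le_total lb la with h | h
  · have hmax' : la ≤ rho * lam := le_trans (le_max_left la lb) hmax
    have hlam1' : lam ≤ la - lab := by
      rcases max_cases (la - lab) (lb - lab) with ⟨heq, _⟩ | ⟨heq, hle⟩ <;> rw [heq] at hlam1 <;> linarith
    exact aux_17 la lb lab lam rho hla hlb hlab (le_trans hlab' (min_le_right la lb)) h hlam0 hlam1' hrho hmax'
  · have hmax' : lb ≤ rho * lam := le_trans (le_max_right la lb) hmax
    have hlam1' : lam ≤ lb - lab := by
      rcases max_cases (la - lab) (lb - lab) with ⟨heq, hle⟩ | ⟨heq, _⟩ <;> rw [heq] at hlam1 <;> linarith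
    have := aux_17 lb la lab lam rho hlb hla hlab (le_trans hlab' (min_le_left la lb)) h hlam0 hlam1' hrho hmax'
    have heq : (1/6) * ((lb - lab) / 2) ^ 2 / lb + (1/6) * ((la - lab) / 2) ^ 2 / la
        - (1/3) * lab * (((lb - lab) / 2) / lb) * (((la - lab) / 2) / la)
      = (1/6) * ((la - lab) / 2) ^ 2 / la + (1/6) * ((lb - lab) / 2) ^ 2 / lb
        - (1/3) * lab * (((la - lab) / 2) / la) * (((lb - lab) / 2) / lb) := by ring
    linarith [heq ▸ this]
end

section
/- Let a₁ ≤ b₁ ≤ a₂ ≤ b₂ be real numbers with a₁ < a₂ and b₁ < b₂, let μ, ν be the uniform probability measures on [a₁,a₂] and [b₁,b₂], and let E(μ,ν) := ∫∫ max(x,y) dμ dν − ½∫∫ max dμ dμ − ½∫∫ max dν dν. Then E(μ,ν) ≥ (1/6)·(ℓ_a − ℓ_b)²/max(ℓ_a, ℓ_b), where ℓ_a = a₂ − a₁ and ℓ_b = b₂ − b₁. -/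
open MeasureTheory

lemma hd_sq (t : ℝ) : HasDerivAt (fun y : ℝ => (max y 0)^2) (2 * max t 0) t := by
  rcases lt_trichotomy t 0 with h | h | h
  · have he : (fun y : ℝ => (max y 0)^2) =ᶠ[nhds t] fun _ => 0 := by
      filter_upwards [eventually_lt_nhds h] with y hy
      simp [max_eq_right hy.le]
    rw [max_eq_right h.le]
    simpa using (hasDerivAt_const t (0:ℝ)).congr_of_eventuallyEq he
  · subst h
    rw [hasDerivAt_iff_tendsto_slope]
    simp only [max_self, mul_zero]
    have ht : Filter.Tendsto (fun y : ℝ => |y|) (nhdsWithin 0 {0}ᶜ) (nhds 0) := by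
      have : Filter.Tendsto (fun y : ℝ => |y|) (nhds 0) (nhds 0) := by
        have h0 := continuous_abs.tendsto (0:ℝ)
        rwa [abs_zero] at h0
      exact this.mono_left nhdsWithin_le_nhds
    refine squeeze_zero_norm (fun y => ?_) ht
    (
      rcases le_or_gt y 0 with hy | hy
      · simp [slope_def_field, max_eq_right hy]
      · rw [slope_def_field, max_eq_right le_rfl, max_eq_left hy.le]
        rw [show (y^2 - (0:ℝ)^2)/(y - 0) = y by field_simp; ring]
        exact le_refl _ )
  · have he : (fun y : ℝ => (max y 0)^2) =ᶠ[nhds t] fun y => y^2 := by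
      filter_upwards [eventually_gt_nhds h] with y hy
      simp [max_eq_left hy.le]
    rw [max_eq_left h.le]
    simpa [mul_comm] using (hasDerivAt_pow 2 t).congr_of_eventuallyEq he

lemma hd_cube (t : ℝ) : HasDerivAt (fun y : ℝ => (max y 0)^3) (3 * (max t 0)^2) t := by
  rcases lt_trichotomy t 0 with h | h | h
  · have he : (fun y : ℝ => (max y 0)^3) =ᶠ[nhds t] fun _ => 0 := by
      filter_upwards [eventually_lt_nhds h] with y hy
      simp [max_eq_right hy.le]
    rw [max_eq_right h.le]
    simpa using (hasDerivAt_const t (0:ℝ)).congr_of_eventuallyEq he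
  · subst h
    rw [hasDerivAt_iff_tendsto_slope]
    simp only [max_self]
    rw [show (3:ℝ) * 0^2 = 0 by ring]
    have ht : Filter.Tendsto (fun y : ℝ => |y|^2) (nhdsWithin 0 {0}ᶜ) (nhds 0) := by
      have : Filter.Tendsto (fun y : ℝ => |y|^2) (nhds 0) (nhds 0) := by
        have h0 := (continuous_abs.pow 2).tendsto (0:ℝ)
        norm_num at h0
        exact h0
      exact this.mono_left nhdsWithin_le_nhds
    refine squeeze_zero_norm (fun y => ?_) ht
    (
      rcases le_or_gt y 0 with hy | hy
      · simp [slope_def_field, max_eq_right hy]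
        positivity
      · rw [slope_def_field, max_eq_right le_rfl, max_eq_left hy.le]
        rw [show (y^3 - (0:ℝ)^3)/(y - 0) = y^2 by field_simp; ring]
        rw [Real.norm_eq_abs, abs_pow] )
  · have he : (fun y : ℝ => (max y 0)^3) =ᶠ[nhds t] fun y => y^3 := by
      filter_upwards [eventually_gt_nhds h] with y hy
      simp [max_eq_left hy.le]
    rw [max_eq_left h.le]
    simpa [mul_comm] using (hasDerivAt_pow 3 t).congr_of_eventuallyEq he

lemma integral_unifIcc_s18 (r s : ℝ) (hrs : r < s) (f : ℝ → ℝ) :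
    ∫ y, f y ∂(unifIcc r s) = (∫ y in r..s, f y) / (s - r) := by
  have hpos : 0 < s - r := sub_pos.mpr hrs
  rw [unifIcc, integral_smul_measure, ENNReal.toReal_inv, ENNReal.toReal_ofReal hpos.le]
  rw [intervalIntegral.integral_of_le hrs.le]
  rw [smul_eq_mul, inv_mul_eq_div]
  congr 1
  exact (MeasureTheory.integral_Icc_eq_integral_Ioc)

lemma inner_eval (r s : ℝ) (hrs : r < s) (x : ℝ) :
    ∫ y, max x y ∂(unifIcc r s)
      = (x*(s-r) + (max (s-x) 0)^2/2 - (max (r-x) 0)^2/2) / (s - r) := by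
  rw [integral_unifIcc_s18 r s hrs]
  congr 1
  have key : ∀ t : ℝ, HasDerivAt (fun y => x*y + (max (y - x) 0)^2/2) (max x t) t := by
    intro t
    have h1 : HasDerivAt (fun y : ℝ => (max (y - x) 0)^2) (2 * max (t - x) 0) t := by
      have := (hd_sq (t - x)).comp t ((hasDerivAt_id t).sub_const x)
      simpa [Function.comp_def] using this
    have h2 : HasDerivAt (fun y => x*y + (max (y - x) 0)^2/2) (x * 1 + 2 * max (t - x) 0 / 2) t :=
      ((hasDerivAt_id t).const_mul x).add (h1.div_const 2)
    convert h2 using 1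
    rcases le_total x t with h | h
    · rw [max_eq_right h, max_eq_left (by linarith)]; ring
    · rw [max_eq_left h, max_eq_right (by linarith)]; ring
  rw [intervalIntegral.integral_eq_sub_of_hasDerivAt (fun t _ => key t)
    ((continuous_const.max continuous_id).intervalIntegrable r s)]
  ring

lemma double_eval (p q r s : ℝ) (hpq : p < q) (hrs : r < s) :
    ∫ x, ∫ y, max x y ∂(unifIcc r s) ∂(unifIcc p q)
      = ((q^2 - p^2)/2*(s-r) - (max (s-q) 0)^3/6 + (max (s-p) 0)^3/6
          + (max (r-q) 0)^3/6 - (max (r-p) 0)^3/6) / (s-r) / (q-p) := by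
  have hs : (0:ℝ) < s - r := sub_pos.mpr hrs
  have hinner : (fun x => ∫ y, max x y ∂(unifIcc r s))
      = fun x => (x*(s-r) + (max (s-x) 0)^2/2 - (max (r-x) 0)^2/2) / (s - r) :=
    funext (inner_eval r s hrs)
  rw [hinner, integral_unifIcc_s18 p q hpq]
  congr 1
  have key : ∀ t : ℝ, HasDerivAt
      (fun x => (x^2/2*(s-r) - (max (s-x) 0)^3/6 + (max (r-x) 0)^3/6) / (s - r))
      ((t*(s-r) + (max (s-t) 0)^2/2 - (max (r-t) 0)^2/2) / (s - r)) t := by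
    intro t
    have hcube : ∀ c : ℝ, HasDerivAt (fun x : ℝ => (max (c - x) 0)^3)
        (-(3 * (max (c - t) 0)^2)) t := by
      intro c
      have := (hd_cube (c - t)).comp t ((hasDerivAt_const t c).sub (hasDerivAt_id t))
      simpa [Function.comp_def] using this
    have hsq : HasDerivAt (fun x : ℝ => x^2/2*(s-r)) (t*(s-r)) t := by
      have := ((hasDerivAt_pow 2 t).div_const 2).mul_const (s-r)
      exact this.congr_deriv (by ring)
    have h := ((hsq.sub ((hcube s).div_const 6)).add ((hcube r).div_const 6)).div_const (s-r)
    exact h.congr_deriv (by ring)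
  rw [intervalIntegral.integral_eq_sub_of_hasDerivAt (fun t _ => key t) ?cont]
  case cont =>
    apply Continuous.intervalIntegrable
    fun_prop
  ring

lemma alg (la lb c : ℝ) (hla : 0 < la) (hlb : 0 < lb) (hc0 : 0 ≤ c)
    (hca : c ≤ la) (hcb : c ≤ lb) :
    (1/6) * (la - lb)^2 / max la lb ≤ la/6 + lb/6 - c/2 + c^3/(6*la*lb) := by
  have hcc : c * c ≤ la * lb := mul_le_mul hca hcb hc0 hla.le
  rcases le_total la lb with h | h
  · rw [max_eq_right h]
    rw [show la/6 + lb/6 - c/2 + c^3/(6*la*lb)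
        = (la*lb*(la+lb) - 3*la*lb*c + c^3)/(6*la*lb) by field_simp; ring,
      div_le_div_iff₀ hlb (by positivity)]
    nlinarith [mul_nonneg (mul_nonneg (sub_nonneg.mpr hca) (sub_nonneg.mpr hcc)) hlb.le,
      mul_nonneg (mul_nonneg (sub_nonneg.mpr hca) (mul_nonneg hla.le (sub_nonneg.mpr hcb))) hlb.le,
      mul_nonneg (mul_nonneg (sub_nonneg.mpr hca) (mul_nonneg hla.le (sub_nonneg.mpr h))) hlb.le]
  · rw [max_eq_left h]
    rw [show la/6 + lb/6 - c/2 + c^3/(6*la*lb)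
        = (la*lb*(la+lb) - 3*la*lb*c + c^3)/(6*la*lb) by field_simp; ring,
      div_le_div_iff₀ hla (by positivity)]
    nlinarith [mul_nonneg (mul_nonneg (sub_nonneg.mpr hcb) (sub_nonneg.mpr hcc)) hla.le,
      mul_nonneg (mul_nonneg (sub_nonneg.mpr hcb) (mul_nonneg hlb.le (sub_nonneg.mpr hca))) hla.le,
      mul_nonneg (mul_nonneg (sub_nonneg.mpr hcb) (mul_nonneg hlb.le (sub_nonneg.mpr h))) hla.le]

theorem stmt_18 (a₁ b₁ a₂ b₂ : ℝ) (h₁ : a₁ ≤ b₁) (h₂ : b₁ ≤ a₂) (h₃ : a₂ ≤ b₂)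
    (ha : a₁ < a₂) (hb : b₁ < b₂) :
    (1/6) * ((a₂ - a₁) - (b₂ - b₁)) ^ 2 / max (a₂ - a₁) (b₂ - b₁)
      ≤ mutualE (unifIcc a₁ a₂) (unifIcc b₁ b₂) := by
  have hE : mutualE (unifIcc a₁ a₂) (unifIcc b₁ b₂)
      = (a₂-a₁)/6 + (b₂-b₁)/6 - (a₂-b₁)/2 + (a₂-b₁)^3/(6*(a₂-a₁)*(b₂-b₁)) := by
    rw [mutualE, double_eval a₁ a₂ b₁ b₂ ha hb, double_eval a₁ a₂ a₁ a₂ ha ha,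
      double_eval b₁ b₂ b₁ b₂ hb hb]
    rw [max_eq_left (sub_nonneg.mpr h₃), max_eq_left (sub_nonneg.mpr (h₁.trans (h₂.trans h₃))),
      max_eq_right (sub_nonpos.mpr h₂), max_eq_left (sub_nonneg.mpr h₁),
      sub_self, max_self, max_eq_left (sub_nonneg.mpr ha.le),
      max_eq_right (sub_nonpos.mpr ha.le), max_eq_left (sub_nonneg.mpr hb.le),
      max_eq_right (sub_nonpos.mpr hb.le)]
    have h1 : a₂ - a₁ ≠ 0 := sub_ne_zero.mpr ha.ne'
    have h2 : b₂ - b₁ ≠ 0 := sub_ne_zero.mpr hb.ne'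
    simp only [sub_self, max_self]
    field_simp
    ring
  rw [hE]
  exact alg (a₂-a₁) (b₂-b₁) (a₂-b₁) (by linarith) (by linarith) (by linarith)
    (by linarith) (by linarith)
end
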